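/- arXiv:2004.00162 — 2 statements merged into one kernel-verified Lean document; each statement's English description precedes it below -/
import Mathlib

section
/- Let G1 and G2 be independent random variables each following the standard Gumbel distribution (with CDF x ↦ exp(-exp(-x))). Then for any real numbers a1, a2, the probability that a1 + G1 ≥ a2 + G2 equals exp(a1) / (exp(a1) + exp(a2)). -/
open MeasureTheory ProbabilityTheory

/-- The standard Gumbel distribution on `ℝ`, with density `exp (-(x + exp (-x)))`
(and CDF `x ↦ exp (-exp (-x))`). -/
noncomputable def gumbel : Measure ℝ :=
  volume.withDensity fun x => ENNReal.ofReal (Real.exp (-(x + Real.exp (-x))))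

section aux

open Real Set Filter Topology

lemma gumbel_deriv {b : ℝ} (hb : b ≠ 0) (x : ℝ) :
    HasDerivAt (fun x => Real.exp (-(b * Real.exp (-x))) / b)
      (Real.exp (-x) * Real.exp (-(b * Real.exp (-x)))) x := by
  have h1 : HasDerivAt (fun x : ℝ => -(b * Real.exp (-x))) (b * Real.exp (-x)) x := by
    have := ((Real.hasDerivAt_exp (-x)).comp x (hasDerivAt_neg x)).const_mul b
    refine this.neg.congr_deriv ?_
    ring
  have h2 := (Real.hasDerivAt_exp (-(b * Real.exp (-x)))).comp x h1
  refine (h2.div_const b).congr_deriv ?_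
  field_simp

lemma gumbel_integrable {b : ℝ} (hb : 0 < b) :
    Integrable (fun x => Real.exp (-x) * Real.exp (-(b * Real.exp (-x)))) := by
  have hcont : Continuous (fun x => Real.exp (-x) * Real.exp (-(b * Real.exp (-x)))) := by
    continuity
  rw [← integrableOn_univ, ← Set.Iic_union_Ioi (a := (0:ℝ))]
  apply IntegrableOn.union
  · -- bound by (4/b^2) * exp x on Iic 0
    have hbound : ∀ x : ℝ, ‖Real.exp (-x) * Real.exp (-(b * Real.exp (-x)))‖
        ≤ (4 / b ^ 2) * Real.exp x := by
      intro x
      rw [Real.norm_eq_abs, abs_of_nonneg (by positivity)]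
      set u := Real.exp (-x) with hu
      have hu0 : 0 < u := Real.exp_pos _
      have key : Real.exp (-(b * u)) ≤ 4 / (b ^ 2 * u ^ 2) := by
        rw [Real.exp_neg, inv_eq_one_div, div_le_div_iff₀ (Real.exp_pos _) (by positivity)]
        have h3 : b * u / 2 + 1 ≤ Real.exp (b * u / 2) := Real.add_one_le_exp _
        have h5 : Real.exp (b * u / 2) * Real.exp (b * u / 2) = Real.exp (b * u) := by
          rw [← Real.exp_add]; ring_nf
        nlinarith [Real.exp_pos (b * u / 2), mul_pos hb hu0]
      calc u * Real.exp (-(b * u)) ≤ u * (4 / (b ^ 2 * u ^ 2)) := by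
            exact mul_le_mul_of_nonneg_left key hu0.le
        _ = (4 / b ^ 2) * (1 / u) := by field_simp
        _ = (4 / b ^ 2) * Real.exp x := by
            rw [hu, Real.exp_neg, one_div, inv_inv]
    apply Integrable.mono ((integrableOn_exp_Iic 0).const_mul (4 / b ^ 2))
      hcont.aestronglyMeasurable.restrict
    filter_upwards with x
    refine (hbound x).trans ?_
    rw [Real.norm_eq_abs, abs_of_nonneg (by positivity)]
  · -- bound by exp (-x) on Ioi 0
    apply Integrable.mono ((exp_neg_integrableOn_Ioi 0 one_pos))
      hcont.aestronglyMeasurable.restrict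
    filter_upwards with x
    rw [Real.norm_eq_abs, abs_of_nonneg (by positivity), Real.norm_eq_abs,
      abs_of_nonneg (Real.exp_pos _).le]
    calc Real.exp (-x) * Real.exp (-(b * Real.exp (-x)))
        ≤ Real.exp (-x) * 1 := by
          apply mul_le_mul_of_nonneg_left _ (Real.exp_pos _).le
          rw [← Real.exp_zero]
          apply Real.exp_le_exp.2
          have := Real.exp_pos (-x)
          nlinarith
      _ = Real.exp (-1 * x) := by rw [mul_one]; ring_nf

lemma gumbel_tendsto_atTop {b : ℝ} (hb : 0 < b) :
    Tendsto (fun x => Real.exp (-(b * Real.exp (-x))) / b) atTop (𝓝 (1 / b)) := by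
  have h1 : Tendsto (fun x : ℝ => -(b * Real.exp (-x))) atTop (𝓝 0) := by
    have h0 : Tendsto (fun x : ℝ => Real.exp (-x)) atTop (𝓝 0) :=
      Real.tendsto_exp_neg_atTop_nhds_zero
    simpa using ((h0.const_mul b).neg)
  have h2 := (Real.continuous_exp.tendsto 0).comp h1
  simp only [Function.comp_def, Real.exp_zero] at h2
  exact h2.div_const b

lemma gumbel_tendsto_atBot {b : ℝ} (hb : 0 < b) :
    Tendsto (fun x => Real.exp (-(b * Real.exp (-x))) / b) atBot (𝓝 0) := by
  have h0 : Tendsto (fun x : ℝ => Real.exp (-x)) atBot atTop :=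
    Real.tendsto_exp_atTop.comp tendsto_neg_atBot_atTop
  have h1 : Tendsto (fun x : ℝ => -(b * Real.exp (-x))) atBot atBot :=
    tendsto_neg_atTop_atBot.comp (h0.const_mul_atTop hb)
  have h2 := Real.tendsto_exp_atBot.comp h1
  simp only [Function.comp_def] at h2
  simpa using h2.div_const b

lemma integral_gumbel {b : ℝ} (hb : 0 < b) :
    ∫ x : ℝ, Real.exp (-x) * Real.exp (-(b * Real.exp (-x))) = 1 / b := by
  rw [integral_of_hasDerivAt_of_tendsto (gumbel_deriv hb.ne')
    (gumbel_integrable hb) (gumbel_tendsto_atBot hb) (gumbel_tendsto_atTop hb)]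
  simp

lemma gumbel_fun_eq (x : ℝ) : Real.exp (-(x + Real.exp (-x)))
    = Real.exp (-x) * Real.exp (-(1 * Real.exp (-x))) := by
  rw [one_mul, ← Real.exp_add]
  ring_nf

lemma gumbel_Iic (t : ℝ) :
    gumbel (Set.Iic t) = ENNReal.ofReal (Real.exp (-Real.exp (-t))) := by
  rw [gumbel, withDensity_apply _ measurableSet_Iic]
  simp only [gumbel_fun_eq]
  rw [← ofReal_integral_eq_lintegral_ofReal (gumbel_integrable one_pos).integrableOn
      (Filter.Eventually.of_forall fun x => by positivity),
    integral_Iic_of_hasDerivAt_of_tendsto' (fun x _ => gumbel_deriv one_ne_zero x)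
      (gumbel_integrable one_pos).integrableOn (gumbel_tendsto_atBot one_pos)]
  norm_num

end aux

theorem gumbel_max_two {Ω : Type*} [MeasureSpace Ω]
    [IsProbabilityMeasure (volume : Measure Ω)] (G₁ G₂ : Ω → ℝ)
    (hG₁ : Measurable G₁) (hG₂ : Measurable G₂)
    (hindep : IndepFun G₁ G₂ volume)
    (hlaw₁ : Measure.map G₁ volume = gumbel) (hlaw₂ : Measure.map G₂ volume = gumbel)
    (a₁ a₂ : ℝ) :
    ((volume : Measure Ω) {ω | a₂ + G₂ ω ≤ a₁ + G₁ ω}).toReal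
      = Real.exp a₁ / (Real.exp a₁ + Real.exp a₂) := by
  have hPμ : IsProbabilityMeasure gumbel := hlaw₁ ▸ Measure.isProbabilityMeasure_map hG₁.aemeasurable
  set c := a₁ - a₂ with hc
  set B := 1 + Real.exp (-c) with hB
  have hBpos : 0 < B := by positivity
  have hS : MeasurableSet {p : ℝ × ℝ | a₂ + p.2 ≤ a₁ + p.1} :=
    measurableSet_le (measurable_const.add measurable_snd)
      (measurable_const.add measurable_fst)
  have hmap : Measure.map (fun ω => (G₁ ω, G₂ ω)) volume = gumbel.prod gumbel := by
    refine ((ProbabilityTheory.indepFun_iff_map_prod_eq_prod_map_map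
      hG₁.aemeasurable hG₂.aemeasurable).1 hindep).trans ?_
    rw [hlaw₁, hlaw₂]
  have h1 : (volume : Measure Ω) {ω | a₂ + G₂ ω ≤ a₁ + G₁ ω}
      = (gumbel.prod gumbel) {p : ℝ × ℝ | a₂ + p.2 ≤ a₁ + p.1} := by
    rw [← hmap, Measure.map_apply (hG₁.prodMk hG₂) hS]
    rfl
  have h2 : (gumbel.prod gumbel) {p : ℝ × ℝ | a₂ + p.2 ≤ a₁ + p.1}
      = ∫⁻ x, ENNReal.ofReal (Real.exp (-Real.exp (-(x + c)))) ∂gumbel := by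
    rw [Measure.prod_apply hS]
    refine lintegral_congr fun x => ?_
    rw [← gumbel_Iic]
    congr 1
    ext y
    simp only [Set.mem_preimage, Set.mem_setOf_eq, Set.mem_Iic, hc]
    constructor <;> intro h <;> linarith
  have hg : Measurable fun x : ℝ => ENNReal.ofReal (Real.exp (-Real.exp (-(x + c)))) := by
    have : Continuous fun x : ℝ => Real.exp (-Real.exp (-(x + c))) := by continuity
    exact ENNReal.measurable_ofReal.comp this.measurable
  have hd : Measurable fun x : ℝ => ENNReal.ofReal (Real.exp (-(x + Real.exp (-x)))) := by
    have : Continuous fun x : ℝ => Real.exp (-(x + Real.exp (-x))) := by continuity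
    exact ENNReal.measurable_ofReal.comp this.measurable
  have h3 : ∫⁻ x, ENNReal.ofReal (Real.exp (-Real.exp (-(x + c)))) ∂gumbel
      = ∫⁻ x, ENNReal.ofReal (Real.exp (-x) * Real.exp (-(B * Real.exp (-x)))) := by
    rw [gumbel, lintegral_withDensity_eq_lintegral_mul volume hd hg]
    refine lintegral_congr fun x => ?_
    simp only [Pi.mul_apply]
    rw [← ENNReal.ofReal_mul (by positivity)]
    congr 1
    rw [← Real.exp_add, ← Real.exp_add]
    congr 1
    rw [show -(x + c) = -x + -c by ring, Real.exp_add, hB]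
    ring
  rw [h1, h2, h3, ← ofReal_integral_eq_lintegral_ofReal (gumbel_integrable hBpos)
      (Filter.Eventually.of_forall fun x => by positivity),
    integral_gumbel hBpos, ENNReal.toReal_ofReal (by positivity)]
  have he : Real.exp (-c) = Real.exp a₂ / Real.exp a₁ := by
    rw [hc, ← Real.exp_sub]; ring_nf
  rw [hB, he]
  have h₁ := Real.exp_pos a₁
  have h₂ := Real.exp_pos a₂
  field_simp
end

section
/- Fix γ ∈ (0, 1/2) and A > 0, and for λ > 0 and u ≥ 0 define ψ^λ(u) = (A/λ)·((λ + uλ²)^γ − λ^γ). Then there exists λ₀ > 0 such that for all u > 1 and all λ > λ₀, the derivative of λ ↦ ψ^λ(u) is strictly negative; moreover (d/dλ)ψ^λ(u) = (A/λ²)·((1−γ)λ^γ − (1−2γ)(λ + uλ²)^γ − γλ(λ + uλ²)^{γ−1}). -/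
theorem psi_lambda_deriv (γ A : ℝ) (hγ : γ ∈ Set.Ioo (0 : ℝ) (1/2)) (hA : 0 < A) :
    (∀ u ≥ (0 : ℝ), ∀ l > (0 : ℝ),
      HasDerivAt (fun lam : ℝ => (A / lam) * ((lam + u * lam ^ 2) ^ γ - lam ^ γ))
        (A / l ^ 2 * ((1 - γ) * l ^ γ - (1 - 2 * γ) * (l + u * l ^ 2) ^ γ
          - γ * l * (l + u * l ^ 2) ^ (γ - 1))) l) ∧
    ∃ l₀ > (0 : ℝ), ∀ u > (1 : ℝ), ∀ l > l₀,
      A / l ^ 2 * ((1 - γ) * l ^ γ - (1 - 2 * γ) * (l + u * l ^ 2) ^ γ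
        - γ * l * (l + u * l ^ 2) ^ (γ - 1)) < 0 := by
  obtain ⟨hγ0, hγ2⟩ := hγ
  constructor
  · intro u hu l hl
    have hP : (0:ℝ) < l + u * l ^ 2 := by positivity
    have h1 : HasDerivAt (fun lam : ℝ => lam + u * lam ^ 2) (1 + u * (2 * l)) l := by
      have := ((hasDerivAt_pow 2 l).const_mul u)
      simpa [Pi.add_def] using (hasDerivAt_id' l).add this
    have h2 : HasDerivAt (fun lam : ℝ => (lam + u * lam ^ 2) ^ γ)
        (γ * (l + u * l ^ 2) ^ (γ - 1) * (1 + u * (2 * l))) l := by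
      have := (Real.hasDerivAt_rpow_const (x := l + u * l ^ 2) (p := γ) (Or.inl hP.ne')).comp l h1
      simpa [Function.comp_def, mul_comm, mul_assoc] using this
    have h3 : HasDerivAt (fun lam : ℝ => lam ^ γ) (γ * l ^ (γ - 1)) l :=
      Real.hasDerivAt_rpow_const (Or.inl hl.ne')
    have h4 : HasDerivAt (fun lam : ℝ => A / lam) (-(A / l ^ 2)) l := by
      have := (hasDerivAt_inv hl.ne').const_mul A
      simpa [div_eq_mul_inv, neg_div] using this
    have h5 := h4.mul (h2.sub h3)
    convert h5 using 1
    · rfl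
    · rfl
    · rfl
    rw [Pi.sub_apply]
    have e1 : (l + u * l ^ 2) ^ γ = (l + u * l ^ 2) ^ (γ - 1) * (l + u * l ^ 2) := by
      rw [← Real.rpow_add_one hP.ne']; ring_nf
    have e2 : l ^ γ = l ^ (γ - 1) * l := by
      rw [← Real.rpow_add_one hl.ne']; ring_nf
    rw [e1, e2]
    field_simp
    ring
  · have h2γ : (0:ℝ) < 1 - 2 * γ := by linarith
    set c : ℝ := (1 - γ) / (1 - 2 * γ) with hc
    have hcpos : 0 < c := by
      apply div_pos (by linarith) h2γ
    refine ⟨max 1 (c ^ (1 / γ)), lt_max_of_lt_left one_pos, ?_⟩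
    intro u hu l hl
    have hl1 : (1:ℝ) < l := lt_of_le_of_lt (le_max_left _ _) hl
    have hl0 : (0:ℝ) < l := by linarith
    have hP : l ^ 2 < l + u * l ^ 2 := by nlinarith
    have hlγ : c < l ^ γ := by
      have h1 : c ^ (1 / γ) < l := lt_of_le_of_lt (le_max_right _ _) hl
      have h2 : (c ^ (1 / γ)) ^ γ < l ^ γ :=
        Real.rpow_lt_rpow (by positivity) h1 hγ0
      rwa [← Real.rpow_mul hcpos.le, one_div_mul_cancel hγ0.ne', Real.rpow_one] at h2
    have hsq : ((l ^ 2 : ℝ)) ^ γ = (l ^ γ) ^ 2 := by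
      rw [← Real.rpow_natCast l 2, ← Real.rpow_mul hl0.le, mul_comm,
        Real.rpow_mul hl0.le, Real.rpow_natCast]
    have hmono : ((l ^ 2 : ℝ)) ^ γ < (l + u * l ^ 2) ^ γ :=
      Real.rpow_lt_rpow (by positivity) hP hγ0
    rw [hsq] at hmono
    have hlγpos : 0 < l ^ γ := Real.rpow_pos_of_pos hl0 γ
    have hkey : (1 - γ) * l ^ γ < (1 - 2 * γ) * (l + u * l ^ 2) ^ γ := by
      have : (1 - γ) * l ^ γ < (1 - 2 * γ) * (l ^ γ) ^ 2 := by
        have := (div_lt_iff₀ h2γ).mp hlγ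
        nlinarith
      nlinarith
    have hthird : 0 < γ * l * (l + u * l ^ 2) ^ (γ - 1) := by
      have : (0:ℝ) < l + u * l ^ 2 := by nlinarith
      have := Real.rpow_pos_of_pos this (γ - 1)
      positivity
    apply mul_neg_of_pos_of_neg (by positivity)
    linarith
end
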